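/- Let V be a vector space over a field K of characteristic zero and * : V × V → V a bilinear (magmatic) product. Then * extends uniquely to a bilinear map * : T(V) × T(V) → T(V) such that for all f, g, h ∈ T(V) and y ∈ V: (i) ε(f*g) = ε(f)ε(g); (ii) Δ(f*g) = Δ(f)*Δ(g), where * acts componentwise on tensors ((a⊗b)*(c⊗d) = (a*c)⊗(b*d)); (iii) f*1 = f; (iv) 1*f = ε(f)·1; (v) f*(g·y) = (f*g)*y − f*(g*y); (vi) (f·g)*h = (f*h⁽¹⁾)·(g*h⁽²⁾); (vii) (f*g)*h = f*((g*h⁽¹⁾)·h⁽²⁾), writing Δ(h) = h⁽¹⁾ ⊗ h⁽²⁾ in Sweedler notation. -/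

import Mathlib

open TensorProduct

/-- The counit of the tensor algebra `T(V)`: the unique algebra morphism `T(V) → K`
vanishing on `V`. -/
noncomputable def taCounit (K V : Type*) [Field K] [AddCommGroup V] [Module K V] :
    TensorAlgebra K V →ₐ[K] K :=
  TensorAlgebra.lift K (0 : V →ₗ[K] K)

/-- The unshuffle coproduct of the tensor algebra `T(V)`: the unique algebra morphism
`T(V) → T(V) ⊗ T(V)` with `Δ(v) = v ⊗ 1 + 1 ⊗ v` for `v ∈ V`. -/
noncomputable def taComul (K V : Type*) [Field K] [AddCommGroup V] [Module K V] :
    TensorAlgebra K V →ₐ[K] TensorAlgebra K V ⊗[K] TensorAlgebra K V :=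
  TensorAlgebra.lift K
    (((TensorProduct.mk K (TensorAlgebra K V) (TensorAlgebra K V)).flip 1
        + TensorProduct.mk K (TensorAlgebra K V) (TensorAlgebra K V) 1)
      ∘ₗ TensorAlgebra.ι K)

namespace Statement8Aux

set_option linter.unusedSectionVars false

variable {K V : Type*} [Field K] [CharZero K] [AddCommGroup V] [Module K V]
  (m : V →ₗ[K] V →ₗ[K] V)

local notation "T" => TensorAlgebra K V

noncomputable def dAlg (y : V) : T →ₐ[K] DualNumber T :=
  TensorAlgebra.lift K
    ((LinearMap.prod (TensorAlgebra.ι K) ((TensorAlgebra.ι K) ∘ₗ (m.flip y)) :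
      V →ₗ[K] T × T) : V →ₗ[K] DualNumber T)

theorem dAlg_fst (y : V) (x : T) : (dAlg m y x).fst = x := by
  have : (TrivSqZeroExt.fstHom K T T).comp (dAlg m y) = AlgHom.id K T := by
    ext v
    simp [dAlg, TensorAlgebra.lift_ι_apply]
    exact congrArg TrivSqZeroExt.fst (TensorAlgebra.lift_ι_apply (A := DualNumber T) _ v)
  exact DFunLike.congr_fun this x

noncomputable def D0 (y : V) : T → T := fun x => (dAlg m y x).snd

theorem D0_iota (y : V) (v : V) : D0 m y (TensorAlgebra.ι K v) = TensorAlgebra.ι K (m v y) := by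
  simp [D0, dAlg, TensorAlgebra.lift_ι_apply]; exact congrArg TrivSqZeroExt.snd (TensorAlgebra.lift_ι_apply (A := DualNumber T) _ v)

theorem D0_one (y : V) : D0 m y 1 = 0 := by simp [D0]

theorem D0_mul (y : V) (a b : T) : D0 m y (a * b) = D0 m y a * b + a * D0 m y b := by
  simp only [D0, map_mul, TrivSqZeroExt.snd_mul, dAlg_fst]
  rw [MulOpposite.smul_eq_mul_unop]
  simp [mul_comm]
  abel

noncomputable def Dend (y : V) : Module.End K T where
  toFun := D0 m y
  map_add' a b := by simp [D0]
  map_smul' c a := by simp [D0]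

@[simp] theorem Dend_apply (y : V) (x : T) : Dend m y x = D0 m y x := rfl

@[simp] theorem D0_add_arg (y : V) (a b : T) :
    D0 m y (a + b) = D0 m y a + D0 m y b := by simp [D0]

theorem Dend_add (y z : V) : Dend m (y + z) = Dend m y + Dend m z := by
  ext x
  induction x using TensorAlgebra.induction with
  | algebraMap r =>
      simp only [Dend_apply, LinearMap.add_apply]
      rw [Algebra.algebraMap_eq_smul_one]
      simp [D0, map_smul, D0_one]
  | ι v => simp [D0_iota, map_add]
  | mul a b ha hb =>
      simp only [Dend_apply, LinearMap.add_apply] at ha hb ⊢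
      simp [D0_mul, ha, hb, mul_add, add_mul]; abel
  | add a b ha hb =>
      simp only [Dend_apply, LinearMap.add_apply] at ha hb ⊢
      simp [ha, hb]; abel

theorem Dend_smul (c : K) (y : V) : Dend m (c • y) = c • Dend m y := by
  ext x
  induction x using TensorAlgebra.induction with
  | algebraMap r =>
      simp only [Dend_apply, LinearMap.smul_apply]
      rw [Algebra.algebraMap_eq_smul_one]
      simp [D0, map_smul, D0_one]
  | ι v => simp [D0_iota, map_smul]
  | mul a b ha hb =>
      simp only [Dend_apply, LinearMap.smul_apply] at ha hb ⊢
      simp [D0_mul, ha, hb, mul_smul_comm, smul_mul_assoc, smul_add]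
  | add a b ha hb =>
      simp only [Dend_apply, LinearMap.smul_apply] at ha hb ⊢
      simp [ha, hb, smul_add]

noncomputable def D : V →ₗ[K] Module.End K T where
  toFun := Dend m
  map_add' := Dend_add m
  map_smul' := Dend_smul m

@[simp] theorem D_iota (y v : V) : D m y (TensorAlgebra.ι K v) = TensorAlgebra.ι K (m v y) :=
  D0_iota m y v
@[simp] theorem D_one (y : V) : D m y 1 = 0 := D0_one m y
theorem D_mul (y : V) (a b : T) : D m y (a * b) = D m y a * b + a * D m y b := D0_mul m y a b

@[simp] theorem counit_iota (v : V) : taCounit K V (TensorAlgebra.ι K v) = 0 := by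
  simp [taCounit, TensorAlgebra.lift_ι_apply]

@[simp] theorem comul_iota (v : V) :
    taComul K V (TensorAlgebra.ι K v)
      = TensorAlgebra.ι K v ⊗ₜ[K] 1 + (1 : T) ⊗ₜ[K] TensorAlgebra.ι K v := by
  simp [taComul, TensorAlgebra.lift_ι_apply]

theorem counit_D (y : V) (x : T) : taCounit K V (D m y x) = 0 := by
  induction x using TensorAlgebra.induction with
  | algebraMap r => rw [Algebra.algebraMap_eq_smul_one]; simp
  | ι v => simp
  | mul a b ha hb => simp [D_mul, ha, hb]
  | add a b ha hb => simp [ha, hb]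

/-- `D y ⊗ id + id ⊗ D y` as an endomorphism of `T ⊗ T`. -/
noncomputable def Dt (y : V) : Module.End K (T ⊗[K] T) :=
  TensorProduct.map (D m y) LinearMap.id + TensorProduct.map LinearMap.id (D m y)

theorem Dt_tmul (y : V) (a b : T) :
    Dt m y (a ⊗ₜ[K] b) = D m y a ⊗ₜ[K] b + a ⊗ₜ[K] D m y b := by
  simp [Dt]

theorem Dt_mul (y : V) (z w : T ⊗[K] T) :
    Dt m y (z * w) = Dt m y z * w + z * Dt m y w := by
  induction z with
  | zero => simp
  | add z₁ z₂ h₁ h₂ => simp only [add_mul, map_add, h₁, h₂]; abel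
  | tmul a b =>
    induction w with
    | zero => simp
    | add w₁ w₂ h₁ h₂ => simp only [mul_add, map_add, h₁, h₂]; abel
    | tmul c d =>
      simp only [Algebra.TensorProduct.tmul_mul_tmul, Dt_tmul, D_mul, add_mul, mul_add,
        TensorProduct.add_tmul, TensorProduct.tmul_add]
      abel

theorem comul_D (y : V) (x : T) : taComul K V (D m y x) = Dt m y (taComul K V x) := by
  induction x using TensorAlgebra.induction with
  | algebraMap r =>
      rw [Algebra.algebraMap_eq_smul_one]
      simp [Dt, Algebra.TensorProduct.one_def]
  | ι v => simp [Dt_tmul, Algebra.TensorProduct.one_def]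
  | mul a b ha hb => rw [D_mul, map_add, map_mul, map_mul, ha, hb, map_mul, Dt_mul]
  | add a b ha hb => simp [ha, hb]

/-- `Φ y : h ↦ h * ι y + D y h`. -/
noncomputable def Phi : V →ₗ[K] Module.End K T :=
  ((LinearMap.mul K T).flip ∘ₗ TensorAlgebra.ι K) + D m

theorem Phi_apply (y : V) (h : T) :
    Phi m y h = h * TensorAlgebra.ι K y + D m y h := rfl

theorem counit_Phi (y : V) (h : T) : taCounit K V (Phi m y h) = 0 := by
  simp [Phi_apply, counit_D]

/-- `Φ y ⊗ id + id ⊗ Φ y` on `T ⊗ T`. -/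
noncomputable def Phit (y : V) : Module.End K (T ⊗[K] T) :=
  TensorProduct.map (Phi m y) LinearMap.id + TensorProduct.map LinearMap.id (Phi m y)

theorem Phit_tmul (y : V) (a b : T) :
    Phit m y (a ⊗ₜ[K] b) = Phi m y a ⊗ₜ[K] b + a ⊗ₜ[K] Phi m y b := by
  simp [Phit]

theorem mul_comul_iota (y : V) (z : T ⊗[K] T) :
    z * taComul K V (TensorAlgebra.ι K y)
      = TensorProduct.map ((LinearMap.mul K T).flip (TensorAlgebra.ι K y)) LinearMap.id z
        + TensorProduct.map LinearMap.id ((LinearMap.mul K T).flip (TensorAlgebra.ι K y)) z := by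
  induction z with
  | zero => simp
  | add z₁ z₂ h₁ h₂ => simp only [add_mul, map_add, h₁, h₂]; abel
  | tmul a b =>
      simp [comul_iota, mul_add, Algebra.TensorProduct.tmul_mul_tmul]

theorem comul_Phi (y : V) (h : T) :
    taComul K V (Phi m y h) = Phit m y (taComul K V h) := by
  rw [Phi_apply, map_add, map_mul, comul_D, mul_comul_iota]
  simp only [Phit, Dt, Phi, LinearMap.add_apply, TensorProduct.map_add_left,
    TensorProduct.map_add_right, LinearMap.comp_apply]
  abel

noncomputable def alphaAlg : T →ₐ[K] (Module.End K T)ᵐᵒᵖ :=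
  TensorAlgebra.lift K ((MulOpposite.opLinearEquiv K).toLinearMap ∘ₗ Phi m)

noncomputable def betaAlg : T →ₐ[K] (Module.End K T)ᵐᵒᵖ :=
  TensorAlgebra.lift K ((MulOpposite.opLinearEquiv K).toLinearMap ∘ₗ D m)

@[simp] theorem alphaAlg_iota (y : V) :
    alphaAlg m (TensorAlgebra.ι K y) = MulOpposite.op (Phi m y) := by
  simp [alphaAlg, TensorAlgebra.lift_ι_apply]

@[simp] theorem betaAlg_iota (y : V) :
    betaAlg m (TensorAlgebra.ι K y) = MulOpposite.op (D m y) := by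
  simp [betaAlg, TensorAlgebra.lift_ι_apply]

noncomputable def Psi : T →ₗ[K] T where
  toFun h := (alphaAlg m h).unop 1
  map_add' a b := by simp
  map_smul' c a := by simp

@[simp] theorem Psi_apply (h : T) : Psi m h = (alphaAlg m h).unop 1 := rfl

@[simp] theorem Psi_one : Psi m 1 = 1 := by simp

theorem Psi_mul_iota (k : T) (y : V) :
    Psi m (k * TensorAlgebra.ι K y) = Phi m y (Psi m k) := by
  simp [Psi, map_mul]

@[simp] theorem Psi_iota (y : V) : Psi m (TensorAlgebra.ι K y) = TensorAlgebra.ι K y := by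
  have := Psi_mul_iota m 1 y
  rw [one_mul] at this
  rw [this, Psi_one, Phi_apply, D_one, one_mul, add_zero]

/-- The `n`-th graded piece of the tensor algebra. -/
noncomputable def G (n : ℕ) : Submodule K T :=
  LinearMap.range (TensorAlgebra.ι K : V →ₗ[K] T) ^ n

theorem G_internal :
    DirectSum.IsInternal ((LinearMap.range (TensorAlgebra.ι K : V →ₗ[K] T) ^ ·) : ℕ → Submodule K T) :=
  DirectSum.Decomposition.isInternal _

theorem iSup_G : (⨆ n, G (K := K) (V := V) n) = ⊤ := G_internal.submodule_iSup_eq_top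

theorem G_zero_mem {x : T} (hx : x ∈ G (K := K) (V := V) 0) : ∃ c : K, x = c • 1 := by
  rw [G, pow_zero, Submodule.mem_one] at hx
  obtain ⟨c, hc⟩ := hx
  exact ⟨c, by rw [← hc, Algebra.algebraMap_eq_smul_one]⟩

theorem G_succ (n : ℕ) : G (K := K) (V := V) (n + 1) = G n * G 1 := by
  rw [G, G, G, pow_one, pow_succ]

theorem D_grade (y : V) (n : ℕ) : ∀ x ∈ G (K := K) (V := V) n, D m y x ∈ G n := by
  induction n with
  | zero =>
      intro x hx
      obtain ⟨c, rfl⟩ := G_zero_mem hx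
      simp only [map_smul, D_one, smul_zero]
      exact Submodule.zero_mem _
  | succ n ih =>
      intro x hx
      rw [G_succ] at hx
      refine Submodule.mul_induction_on hx (fun a ha b hb => ?_) (fun a b ha hb => ?_)
      · rw [G_succ]
        rw [D_mul]
        refine Submodule.add_mem _ (Submodule.mul_mem_mul (ih a ha) hb) ?_
        refine Submodule.mul_mem_mul ha ?_
        rw [G, pow_one] at hb ⊢
        obtain ⟨w, rfl⟩ := hb
        exact ⟨m w y, by simp⟩
      · rw [map_add]; exact Submodule.add_mem _ ha hb

/-- Induction principle: a submodule containing `1` and stable under all `Φ y` is everything. -/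
theorem phi_induction (S : Submodule K T) (h1 : (1 : T) ∈ S)
    (hstep : ∀ (y : V) (h : T), h ∈ S → Phi m y h ∈ S) : ∀ x : T, x ∈ S := by
  have hG : ∀ n, G (K := K) (V := V) n ≤ S := by
    intro n
    induction n with
    | zero =>
        intro x hx
        obtain ⟨c, rfl⟩ := G_zero_mem hx
        exact Submodule.smul_mem _ _ h1
    | succ n ih =>
        intro x hx
        rw [G_succ] at hx
        refine Submodule.mul_induction_on hx (fun a ha b hb => ?_)
          (fun a b ha hb => Submodule.add_mem _ ha hb)
        rw [G, pow_one] at hb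
        obtain ⟨y, rfl⟩ := hb
        have : a * TensorAlgebra.ι K y = Phi m y a - D m y a := by
          rw [Phi_apply]; rw [add_sub_cancel_right]
        rw [this]
        exact Submodule.sub_mem _ (hstep y a (ih ha)) (ih (D_grade m y n a ha))
  intro x
  have : x ∈ (⊤ : Submodule K T) := trivial
  rw [← iSup_G] at this
  exact (iSup_le hG : (⨆ n, G n) ≤ S) this

theorem Psi_surjective : Function.Surjective (Psi m) := by
  intro x
  have : x ∈ LinearMap.range (Psi m) := by
    refine phi_induction m (LinearMap.range (Psi m)) ⟨(1 : T), Psi_one m⟩ (fun y h hh => ?_) x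
    obtain ⟨k, rfl⟩ := hh
    exact ⟨k * TensorAlgebra.ι K y, Psi_mul_iota m k y⟩
  exact this

/-- Filtration. -/
noncomputable def F (n : ℕ) : Submodule K T := ⨆ k ∈ Set.Iic n, G (K := K) (V := V) k

theorem G_le_F {k n : ℕ} (h : k ≤ n) : G (K := K) (V := V) k ≤ F n :=
  le_iSup₂ (f := fun k (_ : k ∈ Set.Iic n) => G (K := K) (V := V) k) k h

theorem F_le {n : ℕ} {S : Submodule K T} (h : ∀ k ≤ n, G (K := K) (V := V) k ≤ S) :
    F n ≤ S := iSup₂_le h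

theorem F_mono {a b : ℕ} (h : a ≤ b) : F (K := K) (V := V) a ≤ F b :=
  F_le fun k hk => G_le_F (hk.trans h)

theorem F_zero_le : F (K := K) (V := V) 0 ≤ G 0 :=
  F_le fun k hk => by rw [Nat.le_zero.mp hk]

theorem D_F (y : V) (n : ℕ) : ∀ x ∈ F (K := K) (V := V) n, D m y x ∈ F n := by
  intro x hx
  refine F_le (n := n) (S := (F n).comap (D m y)) (fun k hk => ?_) hx
  intro z hz
  exact G_le_F hk (D_grade m y k z hz)

theorem mul_iota_F {n : ℕ} {x : T} (hx : x ∈ F (K := K) (V := V) n) (y : V) :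
    x * TensorAlgebra.ι K y ∈ F (n + 1) := by
  refine F_le (n := n) (S := (F (n+1)).comap ((LinearMap.mul K T).flip (TensorAlgebra.ι K y)))
    (fun k hk => ?_) hx
  intro z hz
  have : z * TensorAlgebra.ι K y ∈ G (k + 1) := by
    rw [G_succ]
    exact Submodule.mul_mem_mul hz (by rw [G, pow_one]; exact ⟨y, rfl⟩)
  exact G_le_F (Nat.succ_le_succ hk) this

theorem Psi_G_zero {x : T} (hx : x ∈ G (K := K) (V := V) 0) : Psi m x = x := by
  obtain ⟨c, rfl⟩ := G_zero_mem hx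
  simp

theorem Psi_sub_self {n : ℕ} : ∀ x ∈ G (K := K) (V := V) (n + 1), Psi m x - x ∈ F n := by
  induction n with
  | zero =>
      intro x hx
      rw [G, pow_one] at hx
      obtain ⟨v, rfl⟩ := hx
      rw [Psi_iota, sub_self]
      exact Submodule.zero_mem _
  | succ n ih =>
      intro x hx
      rw [G_succ] at hx
      refine Submodule.mul_induction_on hx (fun a ha b hb => ?_) (fun a b ha hb => ?_)
      · rw [G, pow_one] at hb
        obtain ⟨y, rfl⟩ := hb
        have key : Psi m (a * TensorAlgebra.ι K y) - a * TensorAlgebra.ι K y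
            = (Psi m a - a) * TensorAlgebra.ι K y + D m y a + D m y (Psi m a - a) := by
          rw [Psi_mul_iota, Phi_apply, sub_mul, map_sub]
          abel
        rw [key]
        refine Submodule.add_mem _ (Submodule.add_mem _ ?_ ?_) ?_
        · exact mul_iota_F (ih a ha) y
        · exact G_le_F le_rfl (D_grade m y _ a ha)
        · exact F_mono (Nat.le_succ n) (D_F m y n _ (ih a ha))
      · rw [map_add]
        have : Psi m a + Psi m b - (a + b) = (Psi m a - a) + (Psi m b - b) := by abel
        rw [this]
        exact Submodule.add_mem _ ha hb

theorem Psi_F {n : ℕ} : ∀ x ∈ F (K := K) (V := V) n, Psi m x ∈ F n := by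
  intro x hx
  refine F_le (n := n) (S := (F n).comap (Psi m)) (fun k hk => ?_) hx
  intro z hz
  match k with
  | 0 =>
      simp only [Submodule.mem_comap, Psi_G_zero m hz]
      exact G_le_F hk hz
  | k + 1 =>
      have : Psi m z = z + (Psi m z - z) := by abel
      rw [Submodule.mem_comap, this]
      exact Submodule.add_mem _ (G_le_F hk hz)
        ((F_mono (Nat.le_of_succ_le hk)) (Psi_sub_self m z hz))

theorem G_disjoint_F (n : ℕ) :
    Disjoint (G (K := K) (V := V) (n + 1)) (F n) := by
  have hind : iSupIndep ((LinearMap.range (TensorAlgebra.ι K : V →ₗ[K] T) ^ ·) : ℕ → Submodule K T) :=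
    (G_internal (K := K) (V := V)).submodule_iSupIndep
  have := hind.disjoint_biSup (x := n + 1) (y := Set.Iic n) (by simp)
  exact this

theorem F_succ_eq (n : ℕ) :
    F (K := K) (V := V) (n + 1) = G (n + 1) ⊔ F n := by
  refine le_antisymm (F_le fun k hk => ?_) ?_
  · rcases Nat.lt_or_ge k (n+1) with h | h
    · exact le_sup_of_le_right (G_le_F (Nat.lt_succ_iff.mp h))
    · have : k = n + 1 := le_antisymm hk h
      rw [this]; exact le_sup_left
  · exact sup_le (G_le_F le_rfl) (F_mono (Nat.le_succ n))

theorem Psi_ker_F : ∀ n, ∀ x ∈ F (K := K) (V := V) n, Psi m x = 0 → x = 0 := by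
  intro n
  induction n with
  | zero =>
      intro x hx h0
      have hx0 := F_zero_le hx
      rw [Psi_G_zero m hx0] at h0
      exact h0
  | succ n ih =>
      intro x hx h0
      rw [F_succ_eq, Submodule.mem_sup] at hx
      obtain ⟨b, hb, a, ha, rfl⟩ := hx
      have hsplit : Psi m (b + a) = b + ((Psi m b - b) + Psi m a) := by
        rw [map_add]; abel
      rw [hsplit] at h0
      have hmem : (Psi m b - b) + Psi m a ∈ F n :=
        Submodule.add_mem _ (Psi_sub_self m b hb) (Psi_F m a ha)
      have hb0 : b = 0 := by
        have : b = -((Psi m b - b) + Psi m a) := by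
          rw [eq_neg_iff_add_eq_zero]; exact h0
        have hbF : b ∈ F n := this ▸ Submodule.neg_mem _ hmem
        exact Submodule.disjoint_def.mp (G_disjoint_F n) b hb hbF
      subst hb0
      rw [zero_add]
      refine ih a ha ?_
      simpa using h0

theorem top_le_iSup_F : (⊤ : Submodule K T) ≤ ⨆ n, F (K := K) (V := V) n := by
  rw [← iSup_G]
  exact iSup_le fun n => le_trans (G_le_F le_rfl) (le_iSup _ n)

theorem Psi_injective : Function.Injective (Psi m) := by
  have hker : ∀ x : T, Psi m x = 0 → x = 0 := by
    intro x hx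
    have hmem : x ∈ ⨆ n, F (K := K) (V := V) n := top_le_iSup_F trivial
    obtain ⟨n, hn⟩ := (Submodule.mem_iSup_of_directed _
      (fun a b => ⟨max a b, F_mono (le_max_left a b), F_mono (le_max_right a b)⟩)).mp hmem
    exact Psi_ker_F m n x hn hx
  intro a b hab
  have : Psi m (a - b) = 0 := by rw [map_sub, hab, sub_self]
  have := hker _ this
  exact sub_eq_zero.mp this

noncomputable def PsiEquiv : T ≃ₗ[K] T :=
  LinearEquiv.ofBijective (Psi m) ⟨Psi_injective m, Psi_surjective m⟩

noncomputable def rho : T →ₗ[K] (T →ₗ[K] T) :=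
  (((MulOpposite.opLinearEquiv K (M := Module.End K T)).symm.toLinearMap
      ∘ₗ (betaAlg m).toLinearMap)
    ∘ₗ (PsiEquiv m).symm.toLinearMap)

theorem rho_Psi (k : T) : rho m (Psi m k) = (betaAlg m k).unop := by
  simp [rho, PsiEquiv]
  congr 1
  exact (LinearEquiv.ofBijective (Psi m) ⟨Psi_injective m, Psi_surjective m⟩).symm_apply_apply k

@[simp] theorem rho_one : rho m 1 = LinearMap.id := by
  have h1 : (1 : T) = Psi m 1 := (Psi_one m).symm
  rw [h1, rho_Psi, map_one]
  rfl

@[simp] theorem rho_iota (y : V) : rho m (TensorAlgebra.ι K y) = D m y := by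
  have h1 : TensorAlgebra.ι K y = Psi m (TensorAlgebra.ι K y) := (Psi_iota m y).symm
  rw [h1, rho_Psi, betaAlg_iota]
  rfl

theorem rho_Phi (y : V) (h : T) : rho m (Phi m y h) = D m y ∘ₗ rho m h := by
  obtain ⟨k, rfl⟩ := Psi_surjective m h
  rw [← Psi_mul_iota, rho_Psi, rho_Psi, map_mul, betaAlg_iota]
  rfl

/-- The extension `B`. -/
noncomputable def B : T →ₗ[K] T →ₗ[K] T := (rho m).flip

@[simp] theorem B_apply (f g : T) : B m f g = rho m g f := rfl

theorem B_one (f : T) : B m f 1 = f := by simp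

theorem B_iota (f : T) (y : V) : B m f (TensorAlgebra.ι K y) = D m y f := by simp

theorem B_Phi (f : T) (y : V) (h : T) : B m f (Phi m y h) = D m y (B m f h) := by
  simp [rho_Phi]

theorem B_iota_iota (v w : V) :
    B m (TensorAlgebra.ι K v) (TensorAlgebra.ι K w) = TensorAlgebra.ι K (m v w) := by
  simp

theorem B_add_right (f a b : T) : B m f (a + b) = B m f a + B m f b :=
  map_add ((B m).flip.flip f) a b

theorem B_smul_right (f : T) (c : K) (a : T) : B m f (c • a) = c • B m f a :=
  map_smul ((B m).flip.flip f) c a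

theorem B_counit (f g : T) :
    taCounit K V (B m f g) = taCounit K V f * taCounit K V g := by
  let S : Submodule K T :=
    { carrier := {h | ∀ f, taCounit K V (B m f h) = taCounit K V f * taCounit K V h}
      add_mem' := fun {a b} ha hb f => by
        rw [B_add_right, map_add, ha f, hb f, map_add, mul_add]
      zero_mem' := fun f => by simp
      smul_mem' := fun c x hx f => by
        rw [B_smul_right, map_smul, hx f, map_smul, smul_eq_mul, smul_eq_mul]; ring }
  have : ∀ h : T, h ∈ S := by
    refine phi_induction m S (fun f => by rw [B_one, map_one, mul_one]) (fun y h hh f => ?_)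
    show taCounit K V (B m f (Phi m y h)) = taCounit K V f * taCounit K V (Phi m y h)
    rw [B_Phi, counit_D, counit_Phi, mul_zero]
  exact this g f

theorem B_one_left (f : T) : B m 1 f = taCounit K V f • 1 := by
  let S : Submodule K T :=
    { carrier := {h | B m 1 h = taCounit K V h • 1}
      add_mem' := fun {a b} ha hb => by
        rw [Set.mem_setOf_eq] at *
        rw [B_add_right, ha, hb, map_add, add_smul]
      zero_mem' := by simp
      smul_mem' := fun c x hx => by
        rw [Set.mem_setOf_eq] at *
        rw [B_smul_right, hx, map_smul, smul_smul, smul_eq_mul] }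
  have : ∀ h : T, h ∈ S := by
    refine phi_induction m S ?_ (fun y h hh => ?_)
    · show B m 1 (1:T) = taCounit K V 1 • 1
      rw [B_one, map_one, one_smul]
    · show B m 1 (Phi m y h) = taCounit K V (Phi m y h) • 1
      have hh' : B m 1 h = taCounit K V h • 1 := hh
      rw [B_Phi, hh', map_smul, D_one, smul_zero, counit_Phi, zero_smul]
  exact this f

theorem B_prop_v (f g : T) (y : V) :
    B m f (g * TensorAlgebra.ι K y)
      = B m (B m f g) (TensorAlgebra.ι K y) - B m f (B m g (TensorAlgebra.ι K y)) := by
  have : g * TensorAlgebra.ι K y = Phi m y g - D m y g := by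
    rw [Phi_apply, add_sub_cancel_right]
  rw [this, map_sub, B_iota, B_iota, B_Phi]

/-- `map₂ B B z (1 ⊗ 1) = z`. -/
theorem map₂_one (z : T ⊗[K] T) :
    TensorProduct.map₂ (B m) (B m) z ((1 : T) ⊗ₜ[K] (1 : T)) = z := by
  induction z with
  | zero => simp
  | add a b ha hb => simp [ha, hb]
  | tmul a b => simp [TensorProduct.map₂_apply_tmul, B_one]

theorem Dt_map₂ (y : V) (z w : T ⊗[K] T) :
    Dt m y (TensorProduct.map₂ (B m) (B m) z w)
      = TensorProduct.map₂ (B m) (B m) z (Phit m y w) := by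
  induction z with
  | zero => simp
  | add a b ha hb => simp [map_add, LinearMap.add_apply, ha, hb]
  | tmul a b =>
    induction w with
    | zero => simp
    | add c d hc hd => simp only [map_add, hc, hd]
    | tmul c d =>
        rw [TensorProduct.map₂_apply_tmul, Phit_tmul, TensorProduct.map_tmul,
          Dt_tmul, map_add, TensorProduct.map_tmul, TensorProduct.map_tmul]
        rw [show D m y (B m a c) = B m a (Phi m y c) from (B_Phi m a y c).symm,
          show D m y (B m b d) = B m b (Phi m y d) from (B_Phi m b y d).symm]

theorem B_comul (f g : T) :
    taComul K V (B m f g)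
      = TensorProduct.map₂ (B m) (B m) (taComul K V f) (taComul K V g) := by
  let S : Submodule K T :=
    { carrier := {h | ∀ f, taComul K V (B m f h)
        = TensorProduct.map₂ (B m) (B m) (taComul K V f) (taComul K V h)}
      add_mem' := fun {a b} ha hb f => by
        rw [B_add_right, map_add, ha f, hb f, map_add, map_add]
      zero_mem' := fun f => by simp
      smul_mem' := fun c x hx f => by
        rw [B_smul_right, map_smul, hx f, map_smul, map_smul] }
  have : ∀ h : T, h ∈ S := by
    refine phi_induction m S (fun f => ?_) (fun y h hh f => ?_)
    · show taComul K V (B m f 1)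
        = TensorProduct.map₂ (B m) (B m) (taComul K V f) (taComul K V 1)
      rw [B_one, map_one, Algebra.TensorProduct.one_def, map₂_one]
    · show taComul K V (B m f (Phi m y h))
        = TensorProduct.map₂ (B m) (B m) (taComul K V f) (taComul K V (Phi m y h))
      rw [B_Phi, comul_D, hh f, Dt_map₂, comul_Phi]
  exact this g f

theorem lift_mul_Phi (f g : T) (y : V) (z : T ⊗[K] T) :
    D m y (TensorProduct.lift ((LinearMap.mul K T).compl₁₂ (B m f) (B m g)) z)
      = TensorProduct.lift ((LinearMap.mul K T).compl₁₂ (B m f) (B m g)) (Phit m y z) := by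
  induction z with
  | zero => simp
  | add a b ha hb => simp only [map_add, ha, hb]
  | tmul c d =>
      rw [Phit_tmul, TensorProduct.lift.tmul, map_add, TensorProduct.lift.tmul,
        TensorProduct.lift.tmul]
      simp only [LinearMap.compl₁₂_apply, LinearMap.mul_apply']
      rw [D_mul, B_Phi, B_Phi]

theorem B_prop_vi (f g h : T) :
    B m (f * g) h
      = TensorProduct.lift ((LinearMap.mul K T).compl₁₂ (B m f) (B m g))
          (taComul K V h) := by
  let S : Submodule K T :=
    { carrier := {h | ∀ f g, B m (f * g) h
        = TensorProduct.lift ((LinearMap.mul K T).compl₁₂ (B m f) (B m g)) (taComul K V h)}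
      add_mem' := fun {a b} ha hb f g => by
        rw [B_add_right, ha f g, hb f g, map_add, map_add]
      zero_mem' := fun f g => by simp
      smul_mem' := fun c x hx f g => by
        rw [B_smul_right, hx f g, map_smul, map_smul] }
  have : ∀ h : T, h ∈ S := by
    refine phi_induction m S (fun f g => ?_) (fun y h hh f g => ?_)
    · show B m (f * g) 1 = TensorProduct.lift
          ((LinearMap.mul K T).compl₁₂ (B m f) (B m g)) (taComul K V 1)
      rw [B_one, map_one, Algebra.TensorProduct.one_def, TensorProduct.lift.tmul]
      simp only [LinearMap.compl₁₂_apply, LinearMap.mul_apply']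
      rw [B_one, B_one]
    · show B m (f * g) (Phi m y h) = TensorProduct.lift
          ((LinearMap.mul K T).compl₁₂ (B m f) (B m g)) (taComul K V (Phi m y h))
      rw [B_Phi, hh f g, lift_mul_Phi, comul_Phi]
  exact this h f g

theorem Phi_lift (g : T) (y : V) (z : T ⊗[K] T) :
    Phi m y (TensorProduct.lift ((LinearMap.mul K T).compl₁₂ (B m g) LinearMap.id) z)
      = TensorProduct.lift ((LinearMap.mul K T).compl₁₂ (B m g) LinearMap.id)
          (Phit m y z) := by
  induction z with
  | zero => simp
  | add a b ha hb => simp only [map_add, ha, hb]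
  | tmul c d =>
      rw [Phit_tmul, TensorProduct.lift.tmul, map_add, TensorProduct.lift.tmul,
        TensorProduct.lift.tmul]
      simp only [LinearMap.compl₁₂_apply, LinearMap.mul_apply', LinearMap.id_apply]
      rw [show B m g (Phi m y c) = D m y (B m g c) from B_Phi m g y c,
        Phi_apply, Phi_apply, D_mul, mul_add, mul_assoc]
      abel

theorem B_prop_vii (f g h : T) :
    B m (B m f g) h
      = B m f (TensorProduct.lift ((LinearMap.mul K T).compl₁₂ (B m g) LinearMap.id)
          (taComul K V h)) := by
  let S : Submodule K T :=
    { carrier := {h | ∀ f g, B m (B m f g) h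
        = B m f (TensorProduct.lift ((LinearMap.mul K T).compl₁₂ (B m g) LinearMap.id)
            (taComul K V h))}
      add_mem' := fun {a b} ha hb f g => by
        rw [B_add_right, ha f g, hb f g, map_add, map_add, B_add_right]
      zero_mem' := fun f g => by simp
      smul_mem' := fun c x hx f g => by
        rw [B_smul_right, hx f g, map_smul, map_smul, B_smul_right] }
  have : ∀ h : T, h ∈ S := by
    refine phi_induction m S (fun f g => ?_) (fun y h hh f g => ?_)
    · show B m (B m f g) 1 = B m f (TensorProduct.lift
          ((LinearMap.mul K T).compl₁₂ (B m g) LinearMap.id) (taComul K V 1))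
      rw [B_one, map_one, Algebra.TensorProduct.one_def, TensorProduct.lift.tmul]
      simp only [LinearMap.compl₁₂_apply, LinearMap.mul_apply', LinearMap.id_apply]
      rw [B_one, mul_one]
    · show B m (B m f g) (Phi m y h) = B m f (TensorProduct.lift
          ((LinearMap.mul K T).compl₁₂ (B m g) LinearMap.id) (taComul K V (Phi m y h)))
      rw [B_Phi, hh f g, ← B_Phi, Phi_lift, comul_Phi]
  exact this h f g

theorem B_unique (B' : T →ₗ[K] T →ₗ[K] T)
    (h0 : ∀ v w : V, B' (TensorAlgebra.ι K v) (TensorAlgebra.ι K w)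
        = TensorAlgebra.ι K (m v w))
    (hiii : ∀ f, B' f 1 = f)
    (hiv : ∀ f, B' 1 f = taCounit K V f • (1 : T))
    (hv : ∀ f g (y : V), B' f (g * TensorAlgebra.ι K y)
        = B' (B' f g) (TensorAlgebra.ι K y) - B' f (B' g (TensorAlgebra.ι K y)))
    (hvi : ∀ f g h, B' (f * g) h
        = TensorProduct.lift ((LinearMap.mul K T).compl₁₂ (B' f) (B' g)) (taComul K V h)) :
    B' = B m := by
  have step1 : ∀ (f : T) (y : V), B' f (TensorAlgebra.ι K y) = D m y f := by
    intro f
    induction f using TensorAlgebra.induction with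
    | algebraMap r =>
        intro y
        rw [Algebra.algebraMap_eq_smul_one, map_smul, map_smul, D_one, smul_zero,
          LinearMap.smul_apply, hiv, counit_iota, zero_smul, smul_zero]
    | ι v => intro y; rw [h0, D_iota]
    | mul a b ha hb =>
        intro y
        rw [hvi, comul_iota, map_add, TensorProduct.lift.tmul, TensorProduct.lift.tmul]
        simp only [LinearMap.compl₁₂_apply, LinearMap.mul_apply']
        rw [hiii, hiii, ha y, hb y, D_mul]
    | add a b ha hb =>
        intro y
        rw [map_add, LinearMap.add_apply, ha y, hb y, map_add]
  have step2 : ∀ (h f : T), B' f h = B m f h := by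
    let S : Submodule K T :=
      { carrier := {h | ∀ f, B' f h = B m f h}
        add_mem' := fun {a b} ha hb f => by
          rw [map_add ((B' f)), ha f, hb f, B_add_right]
        zero_mem' := fun f => by simp
        smul_mem' := fun c x hx f => by
          rw [map_smul (B' f), hx f, B_smul_right] }
    have hG : ∀ n, G (K := K) (V := V) n ≤ S := by
      intro n
      induction n with
      | zero =>
          intro x hx
          obtain ⟨c, rfl⟩ := G_zero_mem hx
          intro f
          rw [map_smul (B' f), hiii, B_smul_right, B_one]
      | succ n ih =>
          intro x hx
          rw [G_succ] at hx
          refine Submodule.mul_induction_on hx (fun a ha b hb => ?_)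
            (fun a b ha hb => Submodule.add_mem _ ha hb)
          rw [G, pow_one] at hb
          obtain ⟨y, rfl⟩ := hb
          intro f
          rw [hv, step1, step1, ih ha f, ih (D_grade m y n a ha) f,
            B_prop_v, B_iota, B_iota]
    intro h
    have : h ∈ (⊤ : Submodule K T) := trivial
    rw [← iSup_G] at this
    exact (iSup_le hG : (⨆ n, G n) ≤ S) this
  ext f h
  exact step2 h f

end Statement8Aux

/-- A bilinear magmatic product `*` on `V` extends uniquely to a bilinear
map `B` on `T(V)` satisfying properties (i)–(vii). -/
theorem statement8 {K V : Type*} [Field K] [CharZero K] [AddCommGroup V] [Module K V]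
    (m : V →ₗ[K] V →ₗ[K] V) :
    ∃! B : TensorAlgebra K V →ₗ[K] TensorAlgebra K V →ₗ[K] TensorAlgebra K V,
      (∀ v w : V, B (TensorAlgebra.ι K v) (TensorAlgebra.ι K w)
          = TensorAlgebra.ι K (m v w))
      ∧ (∀ f g, taCounit K V (B f g) = taCounit K V f * taCounit K V g)
      ∧ (∀ f g, taComul K V (B f g)
            = TensorProduct.map₂ B B (taComul K V f) (taComul K V g))
      ∧ (∀ f, B f 1 = f)
      ∧ (∀ f, B 1 f = taCounit K V f • (1 : TensorAlgebra K V))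
      ∧ (∀ f g (y : V), B f (g * TensorAlgebra.ι K y)
            = B (B f g) (TensorAlgebra.ι K y) - B f (B g (TensorAlgebra.ι K y)))
      ∧ (∀ f g h, B (f * g) h
            = TensorProduct.lift
                ((LinearMap.mul K (TensorAlgebra K V)).compl₁₂ (B f) (B g))
                (taComul K V h))
      ∧ (∀ f g h, B (B f g) h
            = B f (TensorProduct.lift
                ((LinearMap.mul K (TensorAlgebra K V)).compl₁₂ (B g) LinearMap.id)
                (taComul K V h))) := by
  refine ⟨Statement8Aux.B m,
    ⟨Statement8Aux.B_iota_iota m, Statement8Aux.B_counit m, Statement8Aux.B_comul m,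
      Statement8Aux.B_one m, Statement8Aux.B_one_left m, Statement8Aux.B_prop_v m,
      Statement8Aux.B_prop_vi m, Statement8Aux.B_prop_vii m⟩, ?_⟩
  rintro B' ⟨h0, -, -, hiii, hiv, hv, hvi, -⟩
  exact Statement8Aux.B_unique m B' h0 hiii hiv hv hvi
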